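/- \sum_{k=0}^\infty binom(2k,k) H_{2k} / 8^k = log(3/2 + sqrt(2)) / sqrt(2). -/

import Mathlib

open Polynomial

noncomputable def cb (k : ℕ) : ℝ := (Nat.choose (2 * k) k : ℝ)

lemma cb_zero : cb 0 = 1 := by simp [cb]

lemma cb_pos (k : ℕ) : 0 < cb k := by
  have := Nat.centralBinom_pos k
  simpa [cb, Nat.centralBinom] using (Nat.cast_pos.mpr this : (0:ℝ) < _)

lemma cb_rec (k : ℕ) : ((k : ℝ) + 1) * cb (k + 1) = 2 * (2 * k + 1) * cb k := by
  have h := Nat.succ_mul_centralBinom_succ k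
  have := congrArg (fun n : ℕ => (n : ℝ)) h
  simp only [Nat.centralBinom] at this
  push_cast at this
  simpa [cb] using this

lemma desc_half (k : ℕ) :
    (descPochhammer ℤ k).smeval ((-1 : ℝ)/2) = (-1/4) ^ k * cb k * (Nat.factorial k : ℝ) := by
  induction k with
  | zero => simp [cb]
  | succ k ih =>
    rw [descPochhammer_succ_right, smeval_mul, ih]
    have hx : ((X : ℤ[X]) - (k : ℤ[X])).smeval ((-1:ℝ)/2) = -1/2 - k := by
      simp [smeval_sub, smeval_X, smeval_natCast]
    rw [hx]
    have hrec := cb_rec k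
    have hk1 : ((k:ℝ)+1) ≠ 0 := by positivity
    have h4 : cb (k+1) = 2 * (2*(k:ℝ)+1) * cb k / ((k:ℝ)+1) := by
      field_simp
      linarith [hrec]
    rw [h4]
    have hfac : (Nat.factorial (k+1) : ℝ) = ((k:ℝ)+1) * Nat.factorial k := by
      push_cast [Nat.factorial_succ]; ring
    rw [hfac]
    field_simp
    ring

lemma ring_choose_half (k : ℕ) :
    Ring.choose ((-1 : ℝ)/2) k = (-1/4) ^ k * cb k := by
  have h := (Ring.descPochhammer_eq_factorial_smul_choose ((-1:ℝ)/2) k).symm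
  rw [desc_half, nsmul_eq_mul] at h
  have hf : (Nat.factorial k : ℝ) ≠ 0 := by positivity
  refine mul_left_cancel₀ hf ?_
  rw [h]; ring

lemma desc_neg_one (k : ℕ) :
    (descPochhammer ℤ k).smeval ((-1 : ℝ)) = (-1) ^ k * (Nat.factorial k : ℝ) := by
  induction k with
  | zero => simp
  | succ k ih =>
    rw [descPochhammer_succ_right, smeval_mul, ih]
    have hx : ((X : ℤ[X]) - (k : ℤ[X])).smeval ((-1:ℝ)) = -1 - k := by
      simp [smeval_sub, smeval_X, smeval_natCast]
    rw [hx]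
    have : (Nat.factorial (k+1) : ℝ) = ((k:ℝ)+1) * Nat.factorial k := by
      push_cast [Nat.factorial_succ]; ring
    rw [this]; ring

lemma ring_choose_neg_one (k : ℕ) : Ring.choose ((-1 : ℝ)) k = (-1) ^ k := by
  have h := (Ring.descPochhammer_eq_factorial_smul_choose ((-1:ℝ)) k).symm
  rw [desc_neg_one, nsmul_eq_mul] at h
  have hf : (Nat.factorial k : ℝ) ≠ 0 := by positivity
  refine mul_left_cancel₀ hf ?_
  rw [h]; ring

lemma cb_antidiagonal (n : ℕ) :
    ∑ ij ∈ Finset.HasAntidiagonal.antidiagonal n, cb ij.1 * cb ij.2 = 4 ^ n := by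
  have h := Ring.add_choose_eq (r := (-1:ℝ)/2) (s := (-1:ℝ)/2) n (Commute.all _ _)
  have hl : ((-1:ℝ)/2) + ((-1:ℝ)/2) = -1 := by norm_num
  rw [hl, ring_choose_neg_one] at h
  have h2 : ((-1:ℝ)) ^ n = ∑ ij ∈ Finset.HasAntidiagonal.antidiagonal n, (-1/4)^(ij.1+ij.2) * (cb ij.1 * cb ij.2) := by
    rw [h]
    refine Finset.sum_congr rfl fun ij _ => ?_
    rw [ring_choose_half, ring_choose_half, pow_add]; ring
  have h3 : ((-1:ℝ)) ^ n = (-1/4)^n * ∑ ij ∈ Finset.HasAntidiagonal.antidiagonal n, cb ij.1 * cb ij.2 := by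
    rw [h2, Finset.mul_sum]
    refine Finset.sum_congr rfl fun ij hij => ?_
    rw [Finset.HasAntidiagonal.mem_antidiagonal.mp hij]
  have h4 : ((-1/4:ℝ))^n ≠ 0 := by
    apply pow_ne_zero; norm_num
  have := h3.symm
  field_simp at this
  apply mul_left_cancel₀ (pow_ne_zero n (by norm_num : (-(1/4):ℝ) ≠ 0))
  rw [this, ← mul_pow]; norm_num

lemma cb_le_four_pow (k : ℕ) : cb k ≤ 4 ^ k := by
  have h1 : Nat.choose (2*k) k ≤ 2 ^ (2*k) := by
    calc Nat.choose (2*k) k ≤ ∑ m ∈ Finset.range (2*k+1), Nat.choose (2*k) m :=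
          Finset.single_le_sum (fun i _ => Nat.zero_le _)
            (Finset.mem_range.mpr (by omega))
      _ = 2 ^ (2*k) := Nat.sum_range_choose (2*k)
  have : ((Nat.choose (2*k) k : ℕ) : ℝ) ≤ ((2:ℝ)) ^ (2*k) := by
    calc ((Nat.choose (2*k) k : ℕ) : ℝ) ≤ ((2 ^ (2*k) : ℕ) : ℝ) := Nat.cast_le.mpr h1
      _ = (2:ℝ) ^ (2*k) := by push_cast; ring
  calc cb k ≤ (2:ℝ) ^ (2*k) := this
    _ = 4 ^ k := by rw [pow_mul]; norm_num

lemma summable_cb {y : ℝ} (h0 : 0 ≤ y) (h : y < 1/4) : Summable (fun k => cb k * y ^ k) := by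
  refine Summable.of_nonneg_of_le (fun k => mul_nonneg (cb_pos k).le (pow_nonneg h0 k)) (fun k => ?_)
    (summable_geometric_of_lt_one (by linarith) (by linarith : 4 * y < 1))
  calc cb k * y ^ k ≤ 4 ^ k * y ^ k := by
        apply mul_le_mul_of_nonneg_right (cb_le_four_pow k) (by positivity)
    _ = (4 * y) ^ k := by rw [mul_pow]

lemma tsum_cb {y : ℝ} (h0 : 0 ≤ y) (h : y < 1/4) :
    ∑' k, cb k * y ^ k = 1 / Real.sqrt (1 - 4 * y) := by
  set S := ∑' k, cb k * y ^ k with hS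
  have hs := summable_cb h0 h
  have hnorm : Summable fun k => ‖cb k * y ^ k‖ := by
    refine hs.congr fun k => ?_
    rw [Real.norm_of_nonneg (mul_nonneg (cb_pos k).le (pow_nonneg h0 k))]
  have hsq : S * S = ∑' n : ℕ, (4 * y) ^ n := by
    rw [hS, tsum_mul_tsum_eq_tsum_sum_antidiagonal_of_summable_norm hnorm hnorm]
    refine tsum_congr fun n => ?_
    have : ∑ ij ∈ Finset.HasAntidiagonal.antidiagonal n, cb ij.1 * y ^ ij.1 * (cb ij.2 * y ^ ij.2)
        = y ^ n * ∑ ij ∈ Finset.HasAntidiagonal.antidiagonal n, cb ij.1 * cb ij.2 := by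
      rw [Finset.mul_sum]
      refine Finset.sum_congr rfl fun ij hij => ?_
      rw [← Finset.HasAntidiagonal.mem_antidiagonal.mp hij, pow_add]; ring
    rw [this, cb_antidiagonal, mul_pow]; ring
  rw [tsum_geometric_of_lt_one (by linarith) (by linarith)] at hsq
  have hSnn : 0 ≤ S := tsum_nonneg fun k => mul_nonneg (cb_pos k).le (pow_nonneg h0 k)
  have : S = Real.sqrt (S * S) := (Real.sqrt_mul_self hSnn).symm
  rw [this, hsq, Real.sqrt_inv, one_div]


noncomputable def gg (t : ℝ) : ℝ :=
  Real.sqrt 2 * (Real.sqrt (2 - t^2) + t) / (Real.sqrt (2 - t^2) * (2 - t + Real.sqrt (2 - t^2)))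

lemma s_pos {t : ℝ} (h0 : 0 ≤ t) (h1 : t ≤ 1) : 1 ≤ Real.sqrt (2 - t^2) := by
  rw [show (1:ℝ) = Real.sqrt 1 by simp]
  apply Real.sqrt_le_sqrt; nlinarith

lemma s_sq {t : ℝ} (h0 : 0 ≤ t) (h1 : t ≤ 1) : (Real.sqrt (2 - t^2))^2 = 2 - t^2 :=
  Real.sq_sqrt (by nlinarith)

lemma u_pos {t : ℝ} (h0 : 0 ≤ t) (h1 : t ≤ 1) : 0 < 2 - t + Real.sqrt (2 - t^2) := by
  have := s_pos h0 h1; linarith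

lemma sqrt_half (t : ℝ) (h0 : 0 ≤ t) (h1 : t ≤ 1) :
    Real.sqrt (1 - t^2/2) = Real.sqrt (2 - t^2) / Real.sqrt 2 := by
  rw [show (1 - t^2/2) = (2 - t^2)/2 by ring, Real.sqrt_div (by nlinarith)]

lemma alg_id {t : ℝ} (h0 : 0 ≤ t) (h1 : t < 1) :
    (1 / Real.sqrt (1 - t^2/2) - Real.sqrt 2) / (t - 1) = gg t := by
  have hs := s_pos h0 h1.le
  have hs2 := s_sq h0 h1.le
  have hu := u_pos h0 h1.le
  set s := Real.sqrt (2 - t^2) with hsdef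
  rw [sqrt_half t h0 h1.le]
  have h2 : (0:ℝ) < Real.sqrt 2 := by positivity
  rw [gg, ← hsdef]
  have hsne : s ≠ 0 := by linarith
  have hune : 2 - t + s ≠ 0 := ne_of_gt hu
  have htne : t - 1 ≠ 0 := by linarith
  field_simp
  linear_combination (-1) * hs2

noncomputable def FF (t : ℝ) : ℝ := -Real.sqrt 2 * Real.log (2 - t + Real.sqrt (2 - t^2))

lemma FF_deriv {t : ℝ} (h0 : 0 ≤ t) (h1 : t ≤ 1) : HasDerivAt FF (gg t) t := by
  have hs := s_pos h0 h1
  have hs2 := s_sq h0 h1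
  have hu := u_pos h0 h1
  set s := Real.sqrt (2 - t^2) with hsdef
  have hsne : (2 - t^2) ≠ 0 := by nlinarith
  have h1' : HasDerivAt (fun x : ℝ => 2 - x^2) (-(2*t)) t := by
    simpa using ((hasDerivAt_pow 2 t).const_sub 2)
  have h2' : HasDerivAt (fun x : ℝ => Real.sqrt (2 - x^2)) (-(2*t) / (2 * s)) t :=
    h1'.sqrt hsne
  have h3' : HasDerivAt (fun x : ℝ => 2 - x + Real.sqrt (2 - x^2))
      (-1 + -(2*t) / (2 * s)) t := by
    have := ((hasDerivAt_id t).const_sub 2).add h2'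
    exact this
  have hune : 2 - t + s ≠ 0 := ne_of_gt hu
  have h4' : HasDerivAt (fun x : ℝ => Real.log (2 - x + Real.sqrt (2 - x^2)))
      ((-1 + -(2*t) / (2 * s)) / (2 - t + s)) t := h3'.log hune
  have h5' := h4'.const_mul (-Real.sqrt 2)
  have heq : -Real.sqrt 2 * ((-1 + -(2*t) / (2 * s)) / (2 - t + s)) = gg t := by
    rw [gg, ← hsdef]
    have hsne' : s ≠ 0 := by linarith
    field_simp
    ring
  rw [heq] at h5'
  exact h5'.congr_deriv rfl

lemma gg_contOn : ContinuousOn gg (Set.Icc 0 1) := by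
  have hc1 : Continuous fun t : ℝ => Real.sqrt (2 - t^2) :=
    (continuous_const.sub (continuous_pow 2)).sqrt
  apply ContinuousOn.div
  · exact (continuous_const.mul (hc1.add continuous_id)).continuousOn
  · exact (hc1.mul ((continuous_const.sub continuous_id).add hc1)).continuousOn
  · intro t ht
    obtain ⟨h0, h1⟩ := ht
    have hs := s_pos h0 h1
    have hu := u_pos h0 h1
    positivity

lemma gg_integral : ∫ t in (0:ℝ)..1, gg t = Real.log (3/2 + Real.sqrt 2) / Real.sqrt 2 := by
  have hderiv : ∀ t ∈ Set.uIcc (0:ℝ) 1, HasDerivAt FF (gg t) t := by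
    intro t ht
    rw [Set.uIcc_of_le (by norm_num : (0:ℝ) ≤ 1)] at ht
    exact FF_deriv ht.1 ht.2
  have hint : IntervalIntegrable gg MeasureTheory.volume 0 1 := by
    rw [intervalIntegrable_iff_integrableOn_Icc_of_le (by norm_num)]
    exact gg_contOn.integrableOn_compact isCompact_Icc
  rw [intervalIntegral.integral_eq_sub_of_hasDerivAt hderiv hint]
  have h2 : Real.sqrt 2 * Real.sqrt 2 = 2 := Real.mul_self_sqrt (by norm_num)
  have hs2 : Real.sqrt 2 ≠ 0 := by positivity
  have e1 : FF 1 = -Real.sqrt 2 * Real.log 2 := by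
    have : (2:ℝ) - 1 + Real.sqrt (2 - 1^2) = 2 := by
      norm_num
    rw [FF, this]
  have e0 : FF 0 = -Real.sqrt 2 * Real.log (2 + Real.sqrt 2) := by
    have : (2:ℝ) - 0 + Real.sqrt (2 - 0^2) = 2 + Real.sqrt 2 := by norm_num
    rw [FF, this]
  rw [e1, e0]
  have hpow : (3/2 + Real.sqrt 2) = ((2 + Real.sqrt 2)/2)^2 := by
    linear_combination (-1/4) * h2
  have hlog2 : Real.log ((2 + Real.sqrt 2)/2) = Real.log (2 + Real.sqrt 2) - Real.log 2 := by
    rw [Real.log_div (by positivity) (by norm_num)]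
  rw [hpow, Real.log_pow, hlog2]
  push_cast
  rw [eq_div_iff hs2]
  linear_combination (Real.log (2 + Real.sqrt 2) - Real.log 2) * h2


noncomputable def Hn (k : ℕ) : ℝ := ∑ j ∈ Finset.Icc 1 (2*k), (1:ℝ)/(j:ℝ)

noncomputable def fk (k : ℕ) (t : ℝ) : ℝ :=
  cb k / 8^k * ∑ j ∈ Finset.Icc 1 (2*k), t^(j-1)

lemma fk_cont (k : ℕ) : Continuous (fk k) :=
  continuous_const.mul (continuous_finset_sum _ fun j _ => continuous_pow _)

lemma fk_nonneg (k : ℕ) {t : ℝ} (ht : 0 ≤ t) : 0 ≤ fk k t := by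
  apply mul_nonneg
  · exact div_nonneg (cb_pos k).le (by positivity)
  · exact Finset.sum_nonneg fun _ _ => pow_nonneg ht _

lemma integral_pow_Ioc {j : ℕ} (hj : 1 ≤ j) :
    ∫ t in Set.Ioc (0:ℝ) 1, t^(j-1) = 1/(j:ℝ) := by
  rw [← intervalIntegral.integral_of_le (by norm_num : (0:ℝ) ≤ 1)]
  rw [integral_pow]
  have : ((j - 1 : ℕ) : ℝ) + 1 = (j : ℝ) := by
    have := Nat.cast_sub hj (R := ℝ)
    push_cast [this]; ring
  rw [this]
  simp [pow_succ]

lemma term_eq (k : ℕ) : cb k * Hn k / 8^k = ∫ t in Set.Ioc (0:ℝ) 1, fk k t := by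
  unfold fk
  rw [MeasureTheory.integral_const_mul]
  have : ∫ t in Set.Ioc (0:ℝ) 1, ∑ j ∈ Finset.Icc 1 (2*k), t^(j-1) = Hn k := by
    rw [MeasureTheory.integral_finset_sum]
    · unfold Hn
      refine Finset.sum_congr rfl fun j hj => ?_
      exact integral_pow_Ioc (Finset.mem_Icc.mp hj).1
    · intro j _
      exact ((continuous_pow (j-1)).integrableOn_Icc).mono_set Set.Ioc_subset_Icc_self
  rw [this]
  ring

lemma Hn_le (k : ℕ) : Hn k ≤ 2 * k := by
  unfold Hn
  calc ∑ j ∈ Finset.Icc 1 (2*k), (1:ℝ)/(j:ℝ) ≤ ∑ j ∈ Finset.Icc 1 (2*k), 1 := by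
        refine Finset.sum_le_sum fun j hj => ?_
        have h1 : 1 ≤ j := (Finset.mem_Icc.mp hj).1
        have : (1:ℝ) ≤ (j:ℝ) := by exact_mod_cast h1
        rw [div_le_one (by linarith)]; exact this
    _ = 2 * k := by
        rw [Finset.sum_const, Nat.card_Icc]
        simp

lemma Hn_nonneg (k : ℕ) : 0 ≤ Hn k :=
  Finset.sum_nonneg fun j _ => by positivity

lemma hsum_main : Summable (fun k => cb k * Hn k / 8^k) := by
  refine Summable.of_nonneg_of_le
    (fun k => div_nonneg (mul_nonneg (cb_pos k).le (Hn_nonneg k)) (by positivity))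
    (fun k => ?_)
    (((summable_pow_mul_geometric_of_norm_lt_one 1
      (by rw [Real.norm_of_nonneg]; norm_num; norm_num : ‖(1/2 : ℝ)‖ < 1)).mul_left 2))
  have h1 : cb k * Hn k ≤ 4^k * (2*k) :=
    mul_le_mul (cb_le_four_pow k) (Hn_le k) (Hn_nonneg k) (by positivity)
  calc cb k * Hn k / 8^k ≤ 4^k * (2*k) / 8^k := by
        apply div_le_div_of_nonneg_right h1 (by positivity) |>.trans_eq rfl
    _ = 2 * ((k:ℝ)^1 * (1/2)^k) := by
        rw [show ((1:ℝ)/2) = 4/8 by norm_num, div_pow]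
        field_simp

lemma pointwise_sum {t : ℝ} (ht : t ∈ Set.Ioo (0:ℝ) 1) : ∑' k, fk k t = gg t := by
  obtain ⟨ht0, ht1⟩ := ht
  have htne : t ≠ 1 := ne_of_lt ht1
  have hgeom : ∀ k : ℕ, fk k t
      = (cb k * (t^2/8)^k - cb k * (1/8:ℝ)^k) * (1/(t-1)) := by
    intro k
    unfold fk
    have h1 : ∑ j ∈ Finset.Icc 1 (2*k), t^(j-1) = ∑ i ∈ Finset.range (2*k), t^i := by
      rw [← Finset.Ico_add_one_right_eq_Icc, Finset.sum_Ico_eq_sum_range]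
      simp
    rw [h1, geom_sum_eq htne]
    have h2 : (t^2/8)^k = t^(2*k)/8^k := by
      rw [div_pow, pow_mul]
    rw [h2]
    have h8 : ((8:ℝ))^k ≠ 0 := by positivity
    have h18 : (1/8:ℝ)^k * 8^k = 1 := by rw [← mul_pow]; norm_num
    field_simp
    linear_combination (cb k) * h18
    
  have hs1 : Summable fun k => cb k * (t^2/8)^k :=
    summable_cb (by positivity) (by nlinarith)
  have hs2 : Summable fun k => cb k * ((1:ℝ)/8)^k :=
    summable_cb (by norm_num) (by norm_num)
  calc ∑' k, fk k t
      = (∑' k, (cb k * (t^2/8)^k - cb k * (1/8:ℝ)^k)) * (1/(t-1)) := by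
        rw [← tsum_mul_right]
        exact tsum_congr hgeom
    _ = ((∑' k, cb k * (t^2/8)^k) - ∑' k, cb k * ((1:ℝ)/8)^k) * (1/(t-1)) := by
        rw [Summable.tsum_sub hs1 hs2]
    _ = (1/Real.sqrt (1 - t^2/2) - Real.sqrt 2) * (1/(t-1)) := by
        rw [tsum_cb (by positivity) (by nlinarith), tsum_cb (by norm_num) (by norm_num)]
        congr 2
        · congr 1; ring
        · rw [show (1 - 4*((1:ℝ)/8)) = 2⁻¹ by norm_num, Real.sqrt_inv, one_div, inv_inv]
    _ = gg t := by
        rw [← alg_id ht0.le ht1]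
        ring

theorem chen_at_eighth :
    ∑' k : ℕ,
        (Nat.choose (2 * k) k : ℝ) * (∑ j ∈ Finset.Icc 1 (2 * k), (1 : ℝ) / (j : ℝ)) / 8 ^ k =
      Real.log (3 / 2 + Real.sqrt 2) / Real.sqrt 2 := by
  have hrw : (fun k : ℕ =>
      (Nat.choose (2 * k) k : ℝ) * (∑ j ∈ Finset.Icc 1 (2 * k), (1 : ℝ) / (j : ℝ)) / 8 ^ k)
      = fun k => cb k * Hn k / 8^k := by
    funext k; rfl
  rw [hrw]
  have hInt : ∀ k, MeasureTheory.Integrable (fk k)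
      (MeasureTheory.volume.restrict (Set.Ioc (0:ℝ) 1)) := fun k =>
    ((fk_cont k).integrableOn_Icc).mono_set Set.Ioc_subset_Icc_self
  have hNorm : Summable fun k => ∫ t in Set.Ioc (0:ℝ) 1, ‖fk k t‖ := by
    refine hsum_main.congr fun k => ?_
    rw [term_eq k]
    refine MeasureTheory.setIntegral_congr_fun measurableSet_Ioc fun t ht => ?_
    exact (Real.norm_of_nonneg (fk_nonneg k ht.1.le)).symm
  have hswap := MeasureTheory.integral_tsum_of_summable_integral_norm hInt hNorm
  calc ∑' k, cb k * Hn k / 8^k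
      = ∑' k, ∫ t in Set.Ioc (0:ℝ) 1, fk k t := tsum_congr term_eq
    _ = ∫ t in Set.Ioc (0:ℝ) 1, ∑' k, fk k t := hswap
    _ = ∫ t in Set.Ioo (0:ℝ) 1, ∑' k, fk k t := MeasureTheory.integral_Ioc_eq_integral_Ioo
    _ = ∫ t in Set.Ioo (0:ℝ) 1, gg t := by
        refine MeasureTheory.setIntegral_congr_fun measurableSet_Ioo fun t ht => ?_
        exact pointwise_sum ht
    _ = ∫ t in Set.Ioc (0:ℝ) 1, gg t := MeasureTheory.integral_Ioc_eq_integral_Ioo.symm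
    _ = ∫ t in (0:ℝ)..1, gg t := (intervalIntegral.integral_of_le (by norm_num)).symm
    _ = Real.log (3 / 2 + Real.sqrt 2) / Real.sqrt 2 := gg_integral
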